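/- arXiv:2404.06858 — 4 statements merged into one kernel-verified Lean document; each statement's English description precedes it below -/
import Mathlib

section
/- Let p be a prime and f ∈ ℤ[x] monic irreducible with K = ℚ[x]/(f) and 𝒪_K = ℤ[α] (α the class of x). If the reduction of f modulo p factors into distinct monic irreducible polynomials g̅_1, ..., g̅_r in 𝔽_p[x], then p𝒪_K = ∏_i (p, g_i(α)) is the factorization of p𝒪_K into distinct prime ideals, where g_i are monic lifts of g̅_i. -/
open Polynomial

private lemma span_pair_mul_span_pair_le' {R : Type*} [CommRing R] (x a b : R) :
    Ideal.span {x, a} * Ideal.span {x, b} ≤ Ideal.span {x, a * b} := by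
  rw [Ideal.mul_le]
  intro r hr s hs
  rw [Ideal.mem_span_pair] at hr hs ⊢
  obtain ⟨c1, c2, rfl⟩ := hr
  obtain ⟨d1, d2, rfl⟩ := hs
  exact ⟨c1 * d1 * x + c1 * d2 * b + c2 * a * d1, c2 * d2, by ring⟩

/-- Dedekind–Kummer in the monogenic, squarefree-reduction case.  Let `f` be a
monic irreducible integer polynomial such that `ℤ[α] = ℤ[x]/(f)` is the ring of
integers of `K = ℚ[x]/(f)` (encoded by `ℤ[α]` being integrally closed).  If
`f mod p` factors into pairwise distinct monic irreducible polynomials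
`g̅_1, …, g̅_r` over `𝔽_p`, then `p𝒪_K = ∏ i, (p, g_i(α))` is the factorization
of `p𝒪_K` into distinct prime ideals. -/
theorem dedekind_kummer (f : ℤ[X]) (hf : f.Monic) (hirr : Irreducible f)
    [IsIntegrallyClosed (AdjoinRoot f)]
    (p : ℕ) (hp : p.Prime) (r : ℕ) (g : Fin r → ℤ[X])
    (hgmonic : ∀ i, (g i).Monic)
    (hgirr : ∀ i, Irreducible ((g i).map (Int.castRingHom (ZMod p))))
    (hgdist : ∀ i j, i ≠ j →
      (g i).map (Int.castRingHom (ZMod p)) ≠ (g j).map (Int.castRingHom (ZMod p)))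
    (hfact : f.map (Int.castRingHom (ZMod p)) =
      ∏ i, (g i).map (Int.castRingHom (ZMod p))) :
    (∀ i, (Ideal.span {(p : AdjoinRoot f), AdjoinRoot.mk f (g i)}).IsPrime) ∧
    (∀ i j, i ≠ j →
      (Ideal.span {(p : AdjoinRoot f), AdjoinRoot.mk f (g i)} : Ideal (AdjoinRoot f)) ≠
        Ideal.span {(p : AdjoinRoot f), AdjoinRoot.mk f (g j)}) ∧
    Ideal.span {(p : AdjoinRoot f)} =
      ∏ i, Ideal.span {(p : AdjoinRoot f), AdjoinRoot.mk f (g i)} := by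
  classical
  haveI : Fact p.Prime := ⟨hp⟩
  set π : ℤ[X] →+* (ZMod p)[X] := Polynomial.mapRingHom (Int.castRingHom (ZMod p)) with hπdef
  have hπ : ∀ q : ℤ[X], π q = q.map (Int.castRingHom (ZMod p)) := fun q => rfl
  have hπsurj : Function.Surjective π :=
    Polynomial.map_surjective _ ZMod.intCast_surjective
  -- anything in the kernel of reduction mod p maps into the ideal (p) of ℤ[α]
  have hker : ∀ h : ℤ[X], π h = 0 →
      AdjoinRoot.mk f h ∈ Ideal.span {(p : AdjoinRoot f)} := by
    intro h h0
    have hmem : h ∈ RingHom.ker π := h0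
    rw [hπdef, Polynomial.ker_mapRingHom, ZMod.ker_intCastRingHom, Ideal.map_span,
      Set.image_singleton, Ideal.mem_span_singleton] at hmem
    obtain ⟨w, rfl⟩ := hmem
    rw [map_mul, Ideal.mem_span_singleton]
    have hC : (AdjoinRoot.mk f) (Polynomial.C ((p : ℕ) : ℤ)) = (p : AdjoinRoot f) := by
      rw [Polynomial.C_eq_natCast, map_natCast]
    rw [hC]
    exact Dvd.intro _ rfl
  -- primality
  have hprime : ∀ i,
      (Ideal.span {(p : AdjoinRoot f), AdjoinRoot.mk f (g i)}).IsPrime := by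
    intro i
    set J : Ideal (ZMod p)[X] :=
      Ideal.span {(g i).map (Int.castRingHom (ZMod p))} with hJ
    haveI hJp : J.IsPrime := (Ideal.span_singleton_prime (hgirr i).ne_zero).mpr
      ((hgirr i).prime)
    haveI : IsDomain ((ZMod p)[X] ⧸ J) := Ideal.Quotient.isDomain J
    set Ψ : ℤ[X] →+* (ZMod p)[X] ⧸ J := (Ideal.Quotient.mk J).comp π with hΨ
    have hΨapp : ∀ q : ℤ[X], Ψ q = Ideal.Quotient.mk J (π q) := fun q => rfl
    have hΨf : Ψ f = 0 := by
      rw [hΨapp, Ideal.Quotient.eq_zero_iff_mem, hπ, hfact, hJ, Ideal.mem_span_singleton]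
      exact Finset.dvd_prod_of_mem _ (Finset.mem_univ i)
    have hroot : f.eval₂ (Ψ.comp Polynomial.C) (Ψ X) = 0 := by
      rw [← Polynomial.hom_eval₂, Polynomial.eval₂_C_X]
      exact hΨf
    set ψ := AdjoinRoot.lift (Ψ.comp Polynomial.C) (Ψ X) hroot with hψ
    have hmk : ∀ q : ℤ[X], ψ (AdjoinRoot.mk f q) = Ψ q := by
      intro q
      rw [hψ, AdjoinRoot.lift_mk, ← Polynomial.hom_eval₂, Polynomial.eval₂_C_X]
    have hkerψ : Ideal.span {(p : AdjoinRoot f), AdjoinRoot.mk f (g i)}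
        = RingHom.ker ψ := by
      apply le_antisymm
      · rw [Ideal.span_le]
        rintro x hx
        simp only [Set.mem_insert_iff, Set.mem_singleton_iff] at hx
        rcases hx with rfl | rfl
        · have hp0 : ψ ((p : ℕ) : AdjoinRoot f) = 0 := by
            rw [← map_natCast (AdjoinRoot.mk f) p, hmk, map_natCast Ψ p,
              ← map_natCast ((Ideal.Quotient.mk J).comp Polynomial.C) p,
              RingHom.comp_apply, ZMod.natCast_self, map_zero, map_zero]
          exact hp0
        · have : ψ (AdjoinRoot.mk f (g i)) = 0 := by
            rw [hmk, hΨapp, Ideal.Quotient.eq_zero_iff_mem, hπ, hJ]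
            exact Ideal.subset_span rfl
          exact this
      · intro a ha
        obtain ⟨q, rfl⟩ := AdjoinRoot.mk_surjective a
        rw [RingHom.mem_ker, hmk, hΨapp, Ideal.Quotient.eq_zero_iff_mem, hJ,
          Ideal.mem_span_singleton] at ha
        obtain ⟨c, hc⟩ := ha
        obtain ⟨c', hc'⟩ := hπsurj c
        have h0 : π (q - g i * c') = 0 := by
          rw [map_sub, map_mul, hc', hc, hπ]
          ring
        have h1 : AdjoinRoot.mk f (q - g i * c')
            ∈ Ideal.span {(p : AdjoinRoot f), AdjoinRoot.mk f (g i)} :=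
          Ideal.span_mono (Set.singleton_subset_iff.mpr (Set.mem_insert _ _)) (hker _ h0)
        have h2 : AdjoinRoot.mk f (g i * c')
            ∈ Ideal.span {(p : AdjoinRoot f), AdjoinRoot.mk f (g i)} := by
          rw [map_mul]
          exact Ideal.mul_mem_right _ _
            (Ideal.subset_span (Set.mem_insert_of_mem _ rfl))
        have hq : AdjoinRoot.mk f q
            = AdjoinRoot.mk f (q - g i * c') + AdjoinRoot.mk f (g i * c') := by
          rw [← map_add, sub_add_cancel]
        rw [hq]
        exact Ideal.add_mem _ h1 h2
    rw [hkerψ]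
    exact RingHom.ker_isPrime ψ
  -- pairwise comaximality
  have hcomax : ∀ i j, i ≠ j →
      Ideal.span {(p : AdjoinRoot f), AdjoinRoot.mk f (g i)}
        ⊔ Ideal.span {(p : AdjoinRoot f), AdjoinRoot.mk f (g j)} = ⊤ := by
    intro i j hij
    have hcop : IsCoprime ((g i).map (Int.castRingHom (ZMod p)))
        ((g j).map (Int.castRingHom (ZMod p))) := by
      apply isCoprime_of_irreducible_dvd
      · rintro ⟨h1, -⟩
        exact (hgirr i).ne_zero h1
      · intro z hz hzi hzj
        have h1 := hz.associated_of_dvd (hgirr i) hzi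
        have h2 : (g i).map (Int.castRingHom (ZMod p))
            ∣ (g j).map (Int.castRingHom (ZMod p)) := h1.symm.dvd.trans hzj
        have h3 := (hgirr i).associated_of_dvd (hgirr j) h2
        exact hgdist i j hij
          (Polynomial.eq_of_monic_of_associated ((hgmonic i).map _) ((hgmonic j).map _) h3)
    obtain ⟨u, v, huv⟩ := hcop
    obtain ⟨U, hU⟩ := hπsurj u
    obtain ⟨V, hV⟩ := hπsurj v
    have h0 : π (U * g i + V * g j - 1) = 0 := by
      rw [map_sub, map_add, map_mul, map_mul, map_one, hU, hV, hπ, hπ, huv, sub_self]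
    have hmem : AdjoinRoot.mk f (U * g i + V * g j - 1)
        ∈ Ideal.span {(p : AdjoinRoot f), AdjoinRoot.mk f (g i)}
          ⊔ Ideal.span {(p : AdjoinRoot f), AdjoinRoot.mk f (g j)} :=
      Ideal.mem_sup_left
        (Ideal.span_mono (Set.singleton_subset_iff.mpr (Set.mem_insert _ _)) (hker _ h0))
    have h1 : AdjoinRoot.mk f (U * g i)
        ∈ Ideal.span {(p : AdjoinRoot f), AdjoinRoot.mk f (g i)} := by
      rw [map_mul]
      exact Ideal.mul_mem_left _ _ (Ideal.subset_span (Set.mem_insert_of_mem _ rfl))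
    have h2 : AdjoinRoot.mk f (V * g j)
        ∈ Ideal.span {(p : AdjoinRoot f), AdjoinRoot.mk f (g j)} := by
      rw [map_mul]
      exact Ideal.mul_mem_left _ _ (Ideal.subset_span (Set.mem_insert_of_mem _ rfl))
    rw [Ideal.eq_top_iff_one]
    have hone : (1 : AdjoinRoot f)
        = AdjoinRoot.mk f (U * g i) + AdjoinRoot.mk f (V * g j)
          - AdjoinRoot.mk f (U * g i + V * g j - 1) := by
      rw [← map_add, ← map_sub, sub_sub_cancel, map_one]
    rw [hone]
    exact sub_mem (add_mem (Ideal.mem_sup_left h1) (Ideal.mem_sup_right h2)) hmem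
  refine ⟨hprime, ?_, ?_⟩
  · intro i j hij heq
    have := hcomax i j hij
    rw [heq, sup_idem] at this
    exact (hprime j).ne_top this
  · -- product formula
    have hle1 : ∀ s : Finset (Fin r),
        (∏ i ∈ s, Ideal.span {(p : AdjoinRoot f), AdjoinRoot.mk f (g i)})
          ≤ Ideal.span {(p : AdjoinRoot f), AdjoinRoot.mk f (∏ i ∈ s, g i)} := by
      intro s
      induction s using Finset.induction_on with
      | empty =>
          rw [Finset.prod_empty, Finset.prod_empty, map_one, Ideal.one_eq_top, top_le_iff,
            Ideal.eq_top_iff_one]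
          exact Ideal.subset_span (Set.mem_insert_of_mem _ rfl)
      | insert _ _ hj ih =>
          rename_i j s
          rw [Finset.prod_insert hj, Finset.prod_insert hj, map_mul]
          calc Ideal.span {(p : AdjoinRoot f), AdjoinRoot.mk f (g j)}
                * ∏ i ∈ s, Ideal.span {(p : AdjoinRoot f), AdjoinRoot.mk f (g i)}
              ≤ Ideal.span {(p : AdjoinRoot f), AdjoinRoot.mk f (g j)}
                * Ideal.span {(p : AdjoinRoot f), AdjoinRoot.mk f (∏ i ∈ s, g i)} :=
                Ideal.mul_mono_right ih
            _ ≤ Ideal.span {(p : AdjoinRoot f),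
                  AdjoinRoot.mk f (g j) * AdjoinRoot.mk f (∏ i ∈ s, g i)} :=
                span_pair_mul_span_pair_le' _ _ _
    have hprodg : AdjoinRoot.mk f (∏ i, g i) ∈ Ideal.span {(p : AdjoinRoot f)} := by
      have h0 : π (∏ i, g i - f) = 0 := by
        rw [map_sub, map_prod]
        have : ∀ i, π (g i) = (g i).map (Int.castRingHom (ZMod p)) := fun i => rfl
        simp only [this, hπ, hfact, sub_self]
      have := hker _ h0
      have heq : AdjoinRoot.mk f (∏ i, g i)
          = AdjoinRoot.mk f (∏ i, g i - f) + AdjoinRoot.mk f f := by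
        rw [← map_add, sub_add_cancel]
      rw [heq, AdjoinRoot.mk_self, add_zero]
      exact this
    have hle : (∏ i, Ideal.span {(p : AdjoinRoot f), AdjoinRoot.mk f (g i)})
        ≤ Ideal.span {(p : AdjoinRoot f)} := by
      refine (hle1 Finset.univ).trans ?_
      rw [Ideal.span_le]
      rintro x hx
      simp only [Set.mem_insert_iff, Set.mem_singleton_iff] at hx
      rcases hx with rfl | rfl
      · exact Ideal.subset_span rfl
      · exact hprodg
    have hge : ∀ s : Finset (Fin r), Ideal.span {(p : AdjoinRoot f)}
        ≤ ∏ i ∈ s, Ideal.span {(p : AdjoinRoot f), AdjoinRoot.mk f (g i)} := by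
      intro s
      induction s using Finset.induction_on with
      | empty => rw [Finset.prod_empty, Ideal.one_eq_top]; exact le_top
      | insert _ _ hj ih =>
          rename_i j s
          rw [Finset.prod_insert hj, Ideal.mul_eq_inf_of_coprime
            (Ideal.sup_prod_eq_top fun i hi => hcomax j i (fun h => hj (h ▸ hi)))]
          refine le_inf ?_ ih
          rw [Ideal.span_le]
          rintro x hx
          rw [Set.mem_singleton_iff] at hx
          subst hx
          exact Ideal.subset_span (Set.mem_insert _ _)
    exact le_antisymm (hge Finset.univ) hle
end

section
/- The class of the prime ideal 𝔭 = (2, α+1) in the class group of ℚ(√235) has order exactly 2; in particular 𝔭 is not principal but 𝔭^2 is principal. -/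
open Polynomial
noncomputable section
abbrev f235 : ℤ[X] := X ^ 2 - C (235 : ℤ)
abbrev R235 := AdjoinRoot f235

lemma f235_monic : f235.Monic := by
  have := Polynomial.monic_X_pow_sub_C (235 : ℤ) (n := 2) (by norm_num)
  exact this

lemma root_sq : (AdjoinRoot.root f235) ^ 2 = 235 := by
  have h := AdjoinRoot.mk_self (f := f235)
  rw [map_sub] at h
  have : (AdjoinRoot.mk f235) (X ^ 2) = (AdjoinRoot.mk f235) (C 235) := by
    rwa [sub_eq_zero] at h
  simpa [AdjoinRoot.mk_C, map_pow, AdjoinRoot.mk_X, map_ofNat] using this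

lemma rep (x : R235) : ∃ a b : ℤ, x = (a : R235) + (b : R235) * AdjoinRoot.root f235 := by
  obtain ⟨p, rfl⟩ := AdjoinRoot.mk_surjective x
  have h1 : AdjoinRoot.mk f235 p = AdjoinRoot.mk f235 (p %ₘ f235) := by
    conv_lhs => rw [← Polynomial.modByMonic_add_div p f235]
    simp
  have hdeg : (p %ₘ f235).degree ≤ 1 := by
    have h2 := Polynomial.degree_modByMonic_lt p f235_monic
    have hdf : f235.degree = 2 := by
      have := Polynomial.degree_X_pow_sub_C (n := 2) (by norm_num) (235:ℤ)
      exact this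
    rw [hdf] at h2
    exact Order.le_of_lt_succ h2
  obtain ⟨a, b, h3⟩ : ∃ a b : ℤ, p %ₘ f235 = C b * X + C a :=
    ⟨(p %ₘ f235).coeff 0, (p %ₘ f235).coeff 1,
      Polynomial.eq_X_add_C_of_degree_le_one hdeg⟩
  refine ⟨a, b, ?_⟩
  rw [h1, h3, map_add, map_mul, AdjoinRoot.mk_X, AdjoinRoot.mk_C, AdjoinRoot.mk_C,
    eq_intCast (AdjoinRoot.of f235), eq_intCast (AdjoinRoot.of f235)]
  ring

lemma sqrt_root : Polynomial.eval₂ (Int.castRingHom ℝ) (Real.sqrt 235) f235 = 0 := by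
  simp only [f235, eval₂_sub, eval₂_pow, eval₂_X, eval₂_C]
  rw [Real.sq_sqrt (by norm_num)]
  norm_num

lemma sqrt_root' : Polynomial.eval₂ (Int.castRingHom ℝ) (-Real.sqrt 235) f235 = 0 := by
  simp only [f235, eval₂_sub, eval₂_pow, eval₂_X, eval₂_C, neg_sq]
  rw [Real.sq_sqrt (by norm_num)]
  norm_num

def φ₁ : R235 →+* ℝ := AdjoinRoot.lift (Int.castRingHom ℝ) (Real.sqrt 235) sqrt_root
def φ₂ : R235 →+* ℝ := AdjoinRoot.lift (Int.castRingHom ℝ) (-Real.sqrt 235) sqrt_root'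

lemma norm_formula (a b : ℤ) :
    φ₁ ((a : R235) + (b : R235) * AdjoinRoot.root f235) *
    φ₂ ((a : R235) + (b : R235) * AdjoinRoot.root f235) = ((a^2 - 235*b^2 : ℤ) : ℝ) := by
  have hs : Real.sqrt 235 ^ 2 = 235 := Real.sq_sqrt (by norm_num)
  simp only [φ₁, φ₂, map_add, map_mul, map_intCast, AdjoinRoot.lift_root]
  push_cast
  linear_combination (-(b:ℝ)^2) * hs

lemma sq_span :
    (Ideal.span {2, AdjoinRoot.root f235 + 1} : Ideal R235) ^ 2 = Ideal.span {2} := by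
  set r := AdjoinRoot.root f235
  rw [pow_two, Ideal.span_pair_mul_span_pair]
  apply le_antisymm
  · rw [Ideal.span_le]
    rintro y hy
    simp only [Set.mem_insert_iff, Set.mem_singleton_iff] at hy
    rcases hy with rfl | rfl | rfl | rfl <;>
      rw [SetLike.mem_coe, Ideal.mem_span_singleton]
    · exact dvd_mul_right 2 2
    · exact dvd_mul_right 2 (r + 1)
    · exact Dvd.intro_left _ rfl
    · exact ⟨118 + r, by linear_combination root_sq⟩
  · rw [Ideal.span_le, Set.singleton_subset_iff, SetLike.mem_coe]
    have m1 : (2 * 2 : R235) ∈ Ideal.span {2 * 2, 2 * (r+1), (r+1) * 2, (r+1) * (r+1)} :=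
      Ideal.subset_span (by simp)
    have m2 : (2 * (r+1) : R235) ∈ Ideal.span {2 * 2, 2 * (r+1), (r+1) * 2, (r+1) * (r+1)} :=
      Ideal.subset_span (by simp)
    have m4 : ((r+1) * (r+1) : R235) ∈ Ideal.span {2 * 2, 2 * (r+1), (r+1) * 2, (r+1) * (r+1)} :=
      Ideal.subset_span (by simp)
    have key : (2 : R235) = (-58) * (2 * 2) + (-1) * (2 * (r+1)) + (r+1) * (r+1) := by
      linear_combination -root_sq
    have h2 := add_mem (add_mem (Ideal.mul_mem_left _ (-58) m1) (Ideal.mul_mem_left _ (-1) m2)) m4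
    rwa [← key] at h2

lemma key5 (a b : ℤ) (h : a^2 - 235*b^2 = 2 ∨ a^2 - 235*b^2 = -2) : False := by
  have h5 : ((a : ZMod 5))^2 - 235*((b : ZMod 5))^2 = 2 ∨
      ((a : ZMod 5))^2 - 235*((b : ZMod 5))^2 = -2 := by
    rcases h with h | h
    · left; exact_mod_cast congrArg (Int.cast : ℤ → ZMod 5) h
    · right; exact_mod_cast congrArg (Int.cast : ℤ → ZMod 5) h
  revert h5
  generalize ((a : ZMod 5)) = x
  generalize ((b : ZMod 5)) = y
  revert x y
  decide

lemma not_principal [IsDomain R235] :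
    ¬ (Ideal.span {2, AdjoinRoot.root f235 + 1} : Ideal R235).IsPrincipal := by
  rintro ⟨x, hx⟩
  rw [Ideal.submodule_span_eq] at hx
  have hsq : Ideal.span {x ^ 2} = (Ideal.span {2} : Ideal R235) := by
    rw [← Ideal.span_singleton_pow, ← hx, sq_span]
  obtain ⟨u, hu⟩ := Ideal.span_singleton_eq_span_singleton.mp hsq
  obtain ⟨a, b, hxab⟩ := rep x
  obtain ⟨c, d, hcd⟩ := rep (u : R235)
  obtain ⟨e, f', hef⟩ := rep ((u⁻¹ : R235ˣ) : R235)
  have nX : φ₁ x * φ₂ x = ((a^2 - 235*b^2 : ℤ) : ℝ) := by rw [hxab]; exact norm_formula a b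
  have nU : φ₁ (u : R235) * φ₂ (u : R235) = ((c^2 - 235*d^2 : ℤ) : ℝ) := by
    rw [hcd]; exact norm_formula c d
  have nV : φ₁ ((u⁻¹ : R235ˣ) : R235) * φ₂ ((u⁻¹ : R235ˣ) : R235) =
      ((e^2 - 235*f'^2 : ℤ) : ℝ) := by rw [hef]; exact norm_formula e f'
  -- unit norm equation
  have huv : (u : R235) * ((u⁻¹ : R235ˣ) : R235) = 1 := u.mul_inv
  have hUV : ((c^2 - 235*d^2) * (e^2 - 235*f'^2) : ℤ) = 1 := by
    have h1 := congrArg φ₁ huv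
    have h2 := congrArg φ₂ huv
    rw [map_mul, map_one] at h1 h2
    have : (φ₁ (u:R235) * φ₂ (u:R235)) * (φ₁ ((u⁻¹:R235ˣ):R235) * φ₂ ((u⁻¹:R235ˣ):R235)) = 1 := by
      rw [← h1] at h2 ⊢
      nlinarith [h1, h2]
    rw [nU, nV] at this
    exact_mod_cast this
  -- main norm equation
  have hE : ((a^2 - 235*b^2)^2 * (c^2 - 235*d^2) : ℤ) = 4 := by
    have h1 := congrArg φ₁ hu
    have h2 := congrArg φ₂ hu
    rw [map_mul, map_pow] at h1 h2
    have hφ1 : φ₁ (2 : R235) = 2 := by rw [show ((2:R235)) = ((2:ℤ) : R235) by push_cast; rfl, map_intCast]; norm_num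
    have hφ2 : φ₂ (2 : R235) = 2 := by rw [show ((2:R235)) = ((2:ℤ) : R235) by push_cast; rfl, map_intCast]; norm_num
    rw [hφ1] at h1; rw [hφ2] at h2
    have : (φ₁ x * φ₂ x)^2 * (φ₁ (u:R235) * φ₂ (u:R235)) = 4 := by
      have : (φ₁ x * φ₂ x)^2 * (φ₁ (u:R235) * φ₂ (u:R235)) =
          (φ₁ x ^ 2 * φ₁ (u:R235)) * (φ₂ x ^ 2 * φ₂ (u:R235)) := by ring
      rw [this, h1, h2]; norm_num
    rw [nX, nU] at this
    exact_mod_cast this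
  have hUnit : (c^2 - 235*d^2 : ℤ) = 1 ∨ (c^2 - 235*d^2 : ℤ) = -1 :=
    Int.isUnit_iff.mp (IsUnit.of_mul_eq_one _ hUV)
  rcases hUnit with hU1 | hU1
  · rw [hU1, mul_one] at hE
    have : (a^2 - 235*b^2 : ℤ) = 2 ∨ (a^2 - 235*b^2 : ℤ) = -2 := by
      have hz : ((a^2 - 235*b^2 : ℤ) - 2) * ((a^2 - 235*b^2) + 2) = 0 := by linear_combination hE
      rcases mul_eq_zero.mp hz with h' | h'
      · left; linarith
      · right; linarith
    exact key5 a b this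
  · rw [hU1] at hE
    nlinarith [sq_nonneg (a^2 - 235*b^2 : ℤ)]

/-- The class of the prime ideal `𝔭 = (2, α + 1)` in the class group of
`ℚ(√235)` (with ring of integers `ℤ[α]`) has order exactly `2`; in particular
`𝔭` is not principal but `𝔭^2` is principal. -/
theorem order_two_class_sqrt235
    [IsDomain (AdjoinRoot (X ^ 2 - C (235 : ℤ)))]
    [IsDedekindDomain (AdjoinRoot (X ^ 2 - C (235 : ℤ)))]
    (h : (Ideal.span {2, AdjoinRoot.root (X ^ 2 - C (235 : ℤ)) + 1} :
        Ideal (AdjoinRoot (X ^ 2 - C (235 : ℤ)))) ∈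
      nonZeroDivisors (Ideal (AdjoinRoot (X ^ 2 - C (235 : ℤ))))) :
    orderOf (ClassGroup.mk0 ⟨_, h⟩) = 2 ∧
    ¬ (Ideal.span {2, AdjoinRoot.root (X ^ 2 - C (235 : ℤ)) + 1} :
        Ideal (AdjoinRoot (X ^ 2 - C (235 : ℤ)))).IsPrincipal ∧
    ((Ideal.span {2, AdjoinRoot.root (X ^ 2 - C (235 : ℤ)) + 1} :
        Ideal (AdjoinRoot (X ^ 2 - C (235 : ℤ)))) ^ 2).IsPrincipal := by
  have hP2 : ((Ideal.span {2, AdjoinRoot.root f235 + 1} : Ideal R235) ^ 2).IsPrincipal := by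
    rw [sq_span]; exact ⟨2, rfl⟩
  refine ⟨?_, not_principal, hP2⟩
  have h2 : (ClassGroup.mk0 ⟨_, h⟩) ^ 2 = 1 := by
    rw [← map_pow]
    have hmem : (Ideal.span {2, AdjoinRoot.root f235 + 1} : Ideal R235) ^ 2 ∈
        nonZeroDivisors (Ideal R235) := pow_mem h 2
    have heq : ((⟨_, h⟩ : ↥(nonZeroDivisors (Ideal R235))) ^ 2) =
        (⟨(Ideal.span {2, AdjoinRoot.root f235 + 1} : Ideal R235) ^ 2, hmem⟩ :
          ↥(nonZeroDivisors (Ideal R235))) :=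
      Subtype.ext (by push_cast; rfl)
    rw [heq, ClassGroup.mk0_eq_one_iff]
    exact hP2
  have h1 : (ClassGroup.mk0 ⟨_, h⟩) ≠ 1 := by
    rw [Ne, ClassGroup.mk0_eq_one_iff]
    exact not_principal
  exact orderOf_eq_prime h2 h1

end
end

section
/- The unit group of ℤ[√3] is {±(2 + √3)^n : n ∈ ℤ}; i.e., it is generated by -1 and 2 + √3. -/
def v3 : (ℤ√3)ˣ :=
  ⟨⟨2, 1⟩, ⟨2, -1⟩, by ext <;> simp [Zsqrtd.re_mul, Zsqrtd.im_mul],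
    by ext <;> simp [Zsqrtd.re_mul, Zsqrtd.im_mul]⟩

lemma norm_unit3 (u : (ℤ√3)ˣ) : Zsqrtd.norm (u : ℤ√3) = 1 := by
  have h : Zsqrtd.norm (u : ℤ√3) * Zsqrtd.norm ((u⁻¹ : (ℤ√3)ˣ) : ℤ√3) = 1 := by
    rw [← Zsqrtd.norm_mul]; simp
  rcases Int.isUnit_iff.mp (IsUnit.of_mul_eq_one _ h) with h1 | h1
  · exact h1
  · exfalso
    have hd : (u : ℤ√3).re * (u : ℤ√3).re - 3 * ((u : ℤ√3).im * (u : ℤ√3).im) = -1 := by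
      have := Zsqrtd.norm_def (u : ℤ√3); rw [h1] at this; linarith
    have h3 : ∀ a : ZMod 3, a * a ≠ -1 := by decide
    apply h3 ((u : ℤ√3).re : ZMod 3)
    have := congrArg (Int.cast : ℤ → ZMod 3) hd
    push_cast at this
    simpa [show (3 : ZMod 3) = 0 from rfl] using this

lemma aux3 : ∀ N : ℕ, ∀ u : (ℤ√3)ˣ, ((u : ℤ√3).re).toNat = N →
    0 < (u : ℤ√3).re → 0 ≤ (u : ℤ√3).im → ∃ n : ℕ, u = v3 ^ n := by
  intro N
  induction N using Nat.strong_induction_on with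
  | _ N ih =>
    intro u hN hx hy
    have hnorm : (u : ℤ√3).re * (u : ℤ√3).re - 3 * ((u : ℤ√3).im * (u : ℤ√3).im) = 1 := by
      have := norm_unit3 u
      rw [Zsqrtd.norm_def] at this; linarith
    rcases eq_or_lt_of_le hy with hy0 | hy1
    · -- im = 0, so u = 1
      have hx1 : (u : ℤ√3).re = 1 := by nlinarith
      refine ⟨0, Units.ext ?_⟩
      simp only [pow_zero, Units.val_one]
      ext <;> simp [hx1, ← hy0]
    · -- im ≥ 1, descend
      set x := (u : ℤ√3).re with hxdef
      set y := (u : ℤ√3).im with hydef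
      have hy' : 1 ≤ y := hy1
      have h1 : 0 < 2 * x - 3 * y := by nlinarith [sq_nonneg (y - 1)]
      have h2 : 0 ≤ -x + 2 * y := by nlinarith
      have h3 : 2 * x - 3 * y < x := by nlinarith
      have hval : ((u * v3⁻¹ : (ℤ√3)ˣ) : ℤ√3) = ⟨2 * x - 3 * y, -x + 2 * y⟩ := by
        show (u : ℤ√3) * (⟨2, -1⟩ : ℤ√3) = _
        ext <;> simp [Zsqrtd.re_mul, Zsqrtd.im_mul] <;> ring
      obtain ⟨m, hm⟩ := ih ((2 * x - 3 * y).toNat) (by omega) (u * v3⁻¹)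
        (by rw [hval]) (by rw [hval]; exact h1) (by rw [hval]; exact h2)
      refine ⟨m + 1, ?_⟩
      have : u = (u * v3⁻¹) * v3 := by group
      rw [this, hm, pow_succ]

/-- The unit group of `ℤ[√3]` is `{±(2+√3)^n : n ∈ ℤ}`: there is a unit with
underlying element `2 + √3`, and every unit is `±` an integer power of it. -/
theorem units_zsqrt3 :
    ∃ v : (ℤ√3)ˣ, (v : ℤ√3) = ⟨2, 1⟩ ∧
      ∀ u : (ℤ√3)ˣ, ∃ n : ℤ, u = v ^ n ∨ u = -(v ^ n) := by
  refine ⟨v3, rfl, fun u => ?_⟩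
  have hnorm : (u : ℤ√3).re * (u : ℤ√3).re - 3 * ((u : ℤ√3).im * (u : ℤ√3).im) = 1 := by
    have := norm_unit3 u
    rw [Zsqrtd.norm_def] at this; linarith
  have hinv : ((u⁻¹ : (ℤ√3)ˣ) : ℤ√3) = star (u : ℤ√3) := by
    have h1 : (u : ℤ√3) * star (u : ℤ√3) = 1 := by
      rw [← Zsqrtd.norm_eq_mul_conj, norm_unit3 u]; rfl
    calc ((u⁻¹ : (ℤ√3)ˣ) : ℤ√3) = ((u⁻¹ : (ℤ√3)ˣ) : ℤ√3) * ((u : ℤ√3) * star (u : ℤ√3)) := by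
          rw [h1, mul_one]
      _ = star (u : ℤ√3) := by rw [← mul_assoc]; simp
  have hneg : ∀ w : (ℤ√3)ˣ, ((-w : (ℤ√3)ˣ) : ℤ√3) = -(w : ℤ√3) := fun w => rfl
  rcases lt_trichotomy ((u : ℤ√3).re) 0 with hx | hx | hx
  · rcases le_or_gt ((u : ℤ√3).im) 0 with hy | hy
    · -- x < 0, y ≤ 0 : use -u
      obtain ⟨m, hm⟩ := aux3 (((-u : (ℤ√3)ˣ) : ℤ√3).re).toNat (-u) rfl
        (by rw [hneg]; simpa using hx) (by rw [hneg]; simpa using hy)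
      refine ⟨m, Or.inr ?_⟩
      rw [zpow_natCast, ← hm, neg_neg]
    · -- x < 0, y > 0 : use -u⁻¹
      obtain ⟨m, hm⟩ := aux3 (((-u⁻¹ : (ℤ√3)ˣ) : ℤ√3).re).toNat (-u⁻¹) rfl
        (by rw [hneg, hinv]; simpa [Zsqrtd.re_star] using hx)
        (by rw [hneg, hinv]; simpa [Zsqrtd.im_star] using hy.le)
      refine ⟨-m, Or.inr ?_⟩
      have h2 : u⁻¹ = -(v3 ^ m) := by rw [← hm, neg_neg]
      rw [zpow_neg, zpow_natCast, ← inv_inv u, h2, inv_neg]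
  · exact absurd hnorm (by rw [hx]; nlinarith [sq_nonneg ((u : ℤ√3).im)])
  · rcases le_or_gt 0 ((u : ℤ√3).im) with hy | hy
    · obtain ⟨m, hm⟩ := aux3 (((u : ℤ√3).re).toNat) u rfl hx hy
      exact ⟨m, Or.inl (by rw [zpow_natCast, hm])⟩
    · -- x > 0, y < 0 : use u⁻¹
      obtain ⟨m, hm⟩ := aux3 (((u⁻¹ : (ℤ√3)ˣ) : ℤ√3).re).toNat u⁻¹ rfl
        (by rw [hinv]; simpa [Zsqrtd.re_star] using hx)
        (by rw [hinv]; simpa [Zsqrtd.im_star] using hy.le)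
      refine ⟨-m, Or.inl ?_⟩
      rw [zpow_neg, zpow_natCast, ← hm, inv_inv]
end

section
/- The number field K = ℚ[x]/(x^4 - 13x^2 + 16) is Galois over ℚ with automorphism group isomorphic to C_2 × C_2. -/
open Polynomial

instance : IsKleinFour (Multiplicative (ZMod 2) × Multiplicative (ZMod 2)) where
  card_four := by simp [Nat.card_prod]
  exponent_two := by simp [Monoid.exponent_prod]

/-- The number field `K = ℚ[x]/(x⁴ - 13x² + 16)` is Galois over `ℚ` with
automorphism group isomorphic to `C₂ × C₂`. -/
theorem galois_biquadratic_quartic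
    [Fact (Irreducible (X ^ 4 - 13 * X ^ 2 + 16 : ℚ[X]))] :
    IsGalois ℚ (AdjoinRoot (X ^ 4 - 13 * X ^ 2 + 16 : ℚ[X])) ∧
    Nonempty ((AdjoinRoot (X ^ 4 - 13 * X ^ 2 + 16 : ℚ[X]) ≃ₐ[ℚ]
        AdjoinRoot (X ^ 4 - 13 * X ^ 2 + 16 : ℚ[X])) ≃*
      (Multiplicative (ZMod 2) × Multiplicative (ZMod 2))) := by
  set f : ℚ[X] := X ^ 4 - 13 * X ^ 2 + 16 with hfdef
  have hirr : Irreducible f := Fact.out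
  have hf0 : f ≠ 0 := hirr.ne_zero
  set K := AdjoinRoot f with hKdef
  letI : Algebra ℚ K := AdjoinRoot.instAlgebra f
  haveI : CharZero K := charZero_of_injective_algebraMap (algebraMap ℚ K).injective
  set α : K := AdjoinRoot.root f with hαdef
  have haev : aeval α f = 0 := by
    rw [AdjoinRoot.aeval_eq, AdjoinRoot.mk_self]
  have heq : α ^ 4 - 13 * α ^ 2 + 16 = 0 := by
    have h := haev
    simp only [hfdef] at h
    simpa [map_ofNat] using h
  have hα0 : α ≠ 0 := by
    intro h
    rw [h] at heq
    norm_num at heq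
  set β : K := 4 * α⁻¹ with hβdef
  have hβ0 : β ≠ 0 := by
    simp [hβdef, hα0]
  have hprod : α ^ 2 * β ^ 2 = 16 := by
    rw [hβdef]
    rw [show α ^ 2 * (4 * α⁻¹) ^ 2 = 16 * (α * α⁻¹) ^ 2 by ring, mul_inv_cancel₀ hα0]
    ring
  have hsum : α ^ 2 + β ^ 2 = 13 := by
    have hα2 : α ^ 2 ≠ 0 := pow_ne_zero _ hα0
    apply mul_left_cancel₀ hα2
    linear_combination heq + hprod
  have hfactor : f.map (algebraMap ℚ K) =
      (X - C α) * (X - C (-α)) * (X - C β) * (X - C (-β)) := by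
    have hm : f.map (algebraMap ℚ K) = X ^ 4 - 13 * X ^ 2 + 16 := by
      simp only [hfdef, Polynomial.map_add, Polynomial.map_sub, Polynomial.map_mul,
        Polynomial.map_pow, Polynomial.map_X, Polynomial.map_ofNat]
    have hexpand : (X - C α) * (X - C (-α)) * (X - C β) * (X - C (-β)) =
        X ^ 4 - (C α ^ 2 + C β ^ 2) * X ^ 2 + C α ^ 2 * C β ^ 2 := by
      simp only [map_neg]
      ring
    rw [hm, hexpand, ← map_pow, ← map_pow, ← map_add, ← map_mul, hsum, hprod]
    norm_num [map_ofNat]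
  have hsplits : Splits (f.map (algebraMap ℚ K)) := by
    rw [hfactor]
    exact Polynomial.Splits.mul
      (Polynomial.Splits.mul
        (Polynomial.Splits.mul (Splits.X_sub_C _) (Splits.X_sub_C _))
        (Splits.X_sub_C _)) (Splits.X_sub_C _)
  haveI hsf : IsSplittingField ℚ K f := by
    constructor
    · exact hsplits
    · rw [eq_top_iff, ← AdjoinRoot.adjoinRoot_eq_top]
      apply Algebra.adjoin_mono
      rw [Set.singleton_subset_iff, Polynomial.mem_rootSet]
      exact ⟨hf0, haev⟩
  have hsep : f.Separable := hirr.separable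
  haveI hgal : IsGalois ℚ K := IsGalois.of_separable_splitting_field hsep
  haveI hfd : FiniteDimensional ℚ K := IsSplittingField.finiteDimensional K f
  have hrank : Module.finrank ℚ K = 4 := by
    rw [(AdjoinRoot.powerBasis hf0).finrank, AdjoinRoot.powerBasis_dim]
    rw [hfdef]
    compute_degree!
  have hcard : Fintype.card (K ≃ₐ[ℚ] K) = 4 := by
    rw [← Nat.card_eq_fintype_card, IsGalois.card_aut_eq_finrank, hrank]
  -- every automorphism squares to the identity
  have key : ∀ σ : K ≃ₐ[ℚ] K, σ (σ α) = α := by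
    intro σ
    have hroot : aeval (σ α) f = 0 := by
      have := Polynomial.aeval_algHom_apply σ α f
      rw [this, haev, map_zero]
    have hzero : (σ α - α) * (σ α - (-α)) * (σ α - β) * (σ α - (-β)) = 0 := by
      have h2 : eval (σ α) (f.map (algebraMap ℚ K)) = 0 := by
        rwa [Polynomial.eval_map, ← Polynomial.aeval_def]
      rw [hfactor] at h2
      simpa [map_ofNat] using h2
    have hβinv : 4 * β⁻¹ = α := by
      rw [hβdef]
      rw [mul_inv, inv_inv, ← mul_assoc, mul_inv_cancel₀ (by norm_num : (4 : K) ≠ 0), one_mul]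
    rcases mul_eq_zero.mp hzero with h | h
    · rcases mul_eq_zero.mp h with h | h
      · rcases mul_eq_zero.mp h with h | h
        · rw [sub_eq_zero.mp h, sub_eq_zero.mp h]
        · have hσ : σ α = -α := sub_eq_zero.mp h
          rw [hσ, map_neg, hσ, neg_neg]
      · have hσ : σ α = β := sub_eq_zero.mp h
        rw [hσ, hβdef, map_mul, map_inv₀, map_ofNat, hσ]
        exact hβinv
    · have hσ : σ α = -β := sub_eq_zero.mp h
      rw [hσ, map_neg, hβdef, map_mul, map_inv₀, map_ofNat, hσ]
      rw [hβdef]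
      rw [show -(4 * (-(4 * α⁻¹))⁻¹) = 4 * (4 * α⁻¹)⁻¹ by ring]
      exact hβinv
  have hsq : ∀ σ : K ≃ₐ[ℚ] K, σ ^ 2 = 1 := by
    intro σ
    have hhom : ((σ ^ 2 : K ≃ₐ[ℚ] K) : K →ₐ[ℚ] K) = ((1 : K ≃ₐ[ℚ] K) : K →ₐ[ℚ] K) := by
      apply AdjoinRoot.algHom_ext
      simpa [pow_two, AlgEquiv.mul_apply] using key σ
    exact AlgEquiv.ext fun x => by
      have := congrArg (fun g : K →ₐ[ℚ] K => g x) hhom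
      simpa using this
  haveI : Nontrivial (K ≃ₐ[ℚ] K) := by
    apply Fintype.one_lt_card_iff_nontrivial.mp
    rw [hcard]; norm_num
  have hexp : Monoid.exponent (K ≃ₐ[ℚ] K) = 2 := by
    have hdvd : Monoid.exponent (K ≃ₐ[ℚ] K) ∣ 2 :=
      Monoid.exponent_dvd_of_forall_pow_eq_one hsq
    rcases (Nat.dvd_prime Nat.prime_two).mp hdvd with h | h
    · exfalso
      obtain ⟨a, b, hab⟩ := exists_pair_ne (K ≃ₐ[ℚ] K)
      have ha := Monoid.pow_exponent_eq_one a
      have hb := Monoid.pow_exponent_eq_one b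
      rw [h, pow_one] at ha hb
      exact hab (ha.trans hb.symm)
    · exact h
  haveI : IsKleinFour (K ≃ₐ[ℚ] K) :=
    ⟨by rw [Nat.card_eq_fintype_card, hcard], hexp⟩
  exact ⟨hgal, IsKleinFour.nonempty_mulEquiv (G₁ := K ≃ₐ[ℚ] K)⟩
end
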